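/- In the quotient ring Γ̄ = Ā[r]/(q(r)), the image of η_R(a_4^5 − 2a_3^4a_4^2 − a_2a_3^2a_4^3 + 2a_2^2a_4^4 + a_2^3a_3^2a_4^2 + a_2^4a_4^3) equals the image of a_4^5 − 2a_3^4a_4^2 − a_2a_3^2a_4^3 + 2a_2^2a_4^4 + a_2^3a_3^2a_4^2 + a_2^4a_4^3; i.e. the mod-(5,a_1,a_5) discriminant is invariant modulo the relation q(r) = 0. -/

import Mathlib

/-!
`Abar = 𝔽_5[a_2,a_3,a_4]` (the variable `0,1,2 : Fin 3` are `a_2, a_3, a_4`),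
`q(t) = t^5 + a_2t^3 + a_3t^2 + a_4t`, and `etaR : Abar → Abar[r]` is the
𝔽_5-algebra map sending `a_i` to the coefficient of `x^{5-i}` in `q(x+r) - q(r)`,
computed in `Abar[r][x]`.  This is the reduction modulo `(5, a_1, a_5)` of the
Gorbounov–Hopkins–Mahowald Hopf algebroid at the prime `5`.
-/

/-- The ring `Ā = 𝔽_5[a_2,a_3,a_4]`. -/
abbrev Abar : Type := MvPolynomial (Fin 3) (ZMod 5)

/-- The generator `a_2`. -/
noncomputable def a2 : Abar := MvPolynomial.X 0
/-- The generator `a_3`. -/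
noncomputable def a3 : Abar := MvPolynomial.X 1
/-- The generator `a_4`. -/
noncomputable def a4 : Abar := MvPolynomial.X 2

/-- The polynomial `q(t) = t^5 + a_2t^3 + a_3t^2 + a_4t` as an element of `Ā[t]`. -/
noncomputable def q : Polynomial Abar :=
  Polynomial.X ^ 5 + Polynomial.C a2 * Polynomial.X ^ 3 + Polynomial.C a3 * Polynomial.X ^ 2 +
    Polynomial.C a4 * Polynomial.X

/-- `q(x+r) - q(r)`, an element of `Ā[r][x]` (the inner variable is `r`, the outer is `x`). -/
noncomputable def qShift : Polynomial (Polynomial Abar) :=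
  Polynomial.eval₂ (Polynomial.C.comp Polynomial.C)
      (Polynomial.X + Polynomial.C Polynomial.X) q -
    Polynomial.eval₂ (Polynomial.C.comp Polynomial.C) (Polynomial.C Polynomial.X) q

/-- The right unit `η_R : Ā → Ā[r]`, sending `a_i` (for `i = 2,3,4`) to the coefficient of
`x^{5-i}` in `q(x+r) - q(r)`. -/
noncomputable def etaR : Abar →ₐ[ZMod 5] Polynomial Abar :=
  MvPolynomial.aeval (fun k : Fin 3 => qShift.coeff (3 - k.1))

open Polynomial in
lemma qShift_eq : qShift =
    X ^ 5 + C (5 * X) * X ^ 4 + C (10 * X ^ 2 + C a2) * X ^ 3 +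
      C (10 * X ^ 3 + 3 * C a2 * X + C a3) * X ^ 2 +
      C (5 * X ^ 4 + 3 * C a2 * X ^ 2 + 2 * C a3 * X + C a4) * X := by
  have hm : ∀ (p r : Polynomial Abar) (x : Polynomial (Polynomial Abar)),
      eval₂ (C.comp C) x (p * r) = eval₂ (C.comp C) x p * eval₂ (C.comp C) x r :=
    fun p r x => eval₂_mul_noncomm _ _ (fun _ => by exact Commute.all (S := Polynomial (Polynomial Abar)) _ _)
  simp only [qShift, q, eval₂_add, hm, eval₂_X_pow, eval₂_X, eval₂_C, RingHom.coe_comp,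
    Function.comp_apply, map_add, map_mul, map_pow, map_ofNat]
  ring

lemma five_eq_zero : (5 : Polynomial Abar) = 0 := by
  have := CharP.cast_eq_zero (Polynomial Abar) 5
  simpa using this

open Polynomial in
lemma etaR_a2 : etaR a2 = C a2 := by
  have h5 := five_eq_zero
  simp only [etaR, MvPolynomial.aeval_X, a2, qShift_eq, coeff_add, coeff_C_mul, coeff_X_pow,
    coeff_X, show ((0 : Fin 3) : ℕ) = 0 from rfl]
  simp only [show (3 - 0 : ℕ) = 3 from rfl]
  simp only [show ((3:ℕ) = 5) = False by simp, show ((3:ℕ) = 4) = False by simp,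
    show ((3:ℕ) = 3) = True by simp, show ((3:ℕ) = 2) = False by simp,
    show ((1:ℕ) = 3) = False by simp, show ((2:ℕ) = 5) = False by simp,
    show ((2:ℕ) = 4) = False by simp, show ((2:ℕ) = 3) = False by simp,
    show ((2:ℕ) = 2) = True by simp, show ((1:ℕ) = 2) = False by simp,
    show ((1:ℕ) = 5) = False by simp, show ((1:ℕ) = 4) = False by simp,
    show ((1:ℕ) = 1) = True by simp, if_true, if_false, mul_one, mul_zero, add_zero, zero_add]
  linear_combination (2 * (X : Polynomial Abar) ^ 2) * h5

open Polynomial in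
lemma etaR_a3 : etaR a3 = C a3 + 3 * C a2 * X := by
  have h5 := five_eq_zero
  simp only [etaR, MvPolynomial.aeval_X, a3, qShift_eq, coeff_add, coeff_C_mul, coeff_X_pow,
    coeff_X, show ((1 : Fin 3) : ℕ) = 1 from rfl]
  simp only [show (3 - 1 : ℕ) = 2 from rfl]
  simp only [show ((3:ℕ) = 5) = False by simp, show ((3:ℕ) = 4) = False by simp,
    show ((3:ℕ) = 3) = True by simp, show ((3:ℕ) = 2) = False by simp,
    show ((1:ℕ) = 3) = False by simp, show ((2:ℕ) = 5) = False by simp,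
    show ((2:ℕ) = 4) = False by simp, show ((2:ℕ) = 3) = False by simp,
    show ((2:ℕ) = 2) = True by simp, show ((1:ℕ) = 2) = False by simp,
    show ((1:ℕ) = 5) = False by simp, show ((1:ℕ) = 4) = False by simp,
    show ((1:ℕ) = 1) = True by simp, if_true, if_false, mul_one, mul_zero, add_zero, zero_add]
  linear_combination (2 * (X : Polynomial Abar) ^ 3) * h5

open Polynomial in
lemma etaR_a4 : etaR a4 = C a4 + 2 * C a3 * X + 3 * C a2 * X ^ 2 := by
  have h5 := five_eq_zero
  simp only [etaR, MvPolynomial.aeval_X, a4, qShift_eq, coeff_add, coeff_C_mul, coeff_X_pow,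
    coeff_X, show ((2 : Fin 3) : ℕ) = 2 from rfl]
  simp only [show (3 - 2 : ℕ) = 1 from rfl]
  simp only [show ((3:ℕ) = 5) = False by simp, show ((3:ℕ) = 4) = False by simp,
    show ((3:ℕ) = 3) = True by simp, show ((3:ℕ) = 2) = False by simp,
    show ((1:ℕ) = 3) = False by simp, show ((2:ℕ) = 5) = False by simp,
    show ((2:ℕ) = 4) = False by simp, show ((2:ℕ) = 3) = False by simp,
    show ((2:ℕ) = 2) = True by simp, show ((1:ℕ) = 2) = False by simp,
    show ((1:ℕ) = 5) = False by simp, show ((1:ℕ) = 4) = False by simp,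
    show ((1:ℕ) = 1) = True by simp, if_true, if_false, mul_one, mul_zero, add_zero, zero_add]
  linear_combination ((X : Polynomial Abar) ^ 4) * h5

open Polynomial in
noncomputable def Hcof : Polynomial Abar := (32:Polynomial Abar)*Polynomial.C a3^5 + (480:Polynomial Abar)*Polynomial.C a2*Polynomial.C a3^3*Polynomial.C a4 + (240:Polynomial Abar)*Polynomial.C a2*Polynomial.C a3^4*Polynomial.X + (540:Polynomial Abar)*Polynomial.C a2^2*Polynomial.C a3*Polynomial.C a4^2 + (1080:Polynomial Abar)*Polynomial.C a2^2*Polynomial.C a3^2*Polynomial.C a4*Polynomial.X + (720:Polynomial Abar)*Polynomial.C a2^2*Polynomial.C a3^3*Polynomial.X^2 + (270:Polynomial Abar)*Polynomial.C a2^3*Polynomial.C a4^2*Polynomial.X + (1080:Polynomial Abar)*Polynomial.C a2^3*Polynomial.C a3*Polynomial.C a4*Polynomial.X^2 + (1080:Polynomial Abar)*Polynomial.C a2^3*Polynomial.C a3^2*Polynomial.X^3 + (-4326:Polynomial Abar)*Polynomial.C a2^3*Polynomial.C a3^3 + (405:Polynomial Abar)*Polynomial.C a2^4*Polynomial.C a4*Polynomial.X^3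 + (810:Polynomial Abar)*Polynomial.C a2^4*Polynomial.C a3*Polynomial.X^4 + (-4293:Polynomial Abar)*Polynomial.C a2^4*Polynomial.C a3*Polynomial.C a4 + (-6345:Polynomial Abar)*Polynomial.C a2^4*Polynomial.C a3^2*Polynomial.X + (243:Polynomial Abar)*Polynomial.C a2^5*Polynomial.X^5 + (-1647:Polynomial Abar)*Polynomial.C a2^5*Polynomial.C a4*Polynomial.X + (-5157:Polynomial Abar)*Polynomial.C a2^5*Polynomial.C a3*Polynomial.X^2 + (-1782:Polynomial Abar)*Polynomial.C a2^6*Polynomial.X^3 + (7155:Polynomial Abar)*Polynomial.C a2^6*Polynomial.C a3 + (1890:Polynomial Abar)*Polynomial.C a2^7*Polynomial.X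

open Polynomial in
noncomputable def Gcof : Polynomial Abar := (2:Polynomial Abar)*Polynomial.C a3*Polynomial.C a4^4*Polynomial.X + (8:Polynomial Abar)*Polynomial.C a3^2*Polynomial.C a4^3*Polynomial.X^2 + (16:Polynomial Abar)*Polynomial.C a3^3*Polynomial.C a4^2*Polynomial.X^3 + (16:Polynomial Abar)*Polynomial.C a3^4*Polynomial.C a4*Polynomial.X^4 + (-8:Polynomial Abar)*Polynomial.C a3^5*Polynomial.C a4*Polynomial.X + (-8:Polynomial Abar)*Polynomial.C a3^6*Polynomial.X^2 + (3:Polynomial Abar)*Polynomial.C a2*Polynomial.C a4^4*Polynomial.X^2 + (24:Polynomial Abar)*Polynomial.C a2*Polynomial.C a3*Polynomial.C a4^3*Polynomial.X^3 + (72:Polynomial Abar)*Polynomial.C a2*Polynomial.C a3^2*Polynomial.C a4^2*Polynomial.X^4 + (-102:Polynomial Abar)*Polynomial.C a2*Polynomial.C a3^3*Polynomial.C a4^2*Polynomial.X + (-168:Polynomial Abar)*Polynomial.C a2*Polynomial.C a3^4*Polynomial.C a4*Polynomial.X^2 + (-80:Polynomial Abar)*Polynomial.C a2*Polynomial.C a3^5*Polynomial.X^3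 + (18:Polynomial Abar)*Polynomial.C a2^2*Polynomial.C a4^3*Polynomial.X^4 + (-106:Polynomial Abar)*Polynomial.C a2^2*Polynomial.C a3*Polynomial.C a4^3*Polynomial.X + (-345:Polynomial Abar)*Polynomial.C a2^2*Polynomial.C a3^2*Polynomial.C a4^2*Polynomial.X^2 + (-580:Polynomial Abar)*Polynomial.C a2^2*Polynomial.C a3^3*Polynomial.C a4*Polynomial.X^3 + (-350:Polynomial Abar)*Polynomial.C a2^2*Polynomial.C a3^4*Polynomial.X^4 + (-51:Polynomial Abar)*Polynomial.C a2^3*Polynomial.C a4^3*Polynomial.X^2 + (-414:Polynomial Abar)*Polynomial.C a2^3*Polynomial.C a3*Polynomial.C a4^2*Polynomial.X^3 + (-963:Polynomial Abar)*Polynomial.C a2^3*Polynomial.C a3^2*Polynomial.C a4*Polynomial.X^4 + (866:Polynomial Abar)*Polynomial.C a2^3*Polynomial.C a3^3*Polynomial.C a4*Polynomial.X + (866:Polynomial Abar)*Polynomial.C a2^3*Polynomial.C a3^4*Polynomial.X^2 + (-162:Polynomial Abar)*Polynomial.C a2^4*Polynomial.C a4^2*Polynomial.X^4 + (861:Polynomial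 Abar)*Polynomial.C a2^4*Polynomial.C a3*Polynomial.C a4^2*Polynomial.X + (2136:Polynomial Abar)*Polynomial.C a2^4*Polynomial.C a3^2*Polynomial.C a4*Polynomial.X^2 + (2143:Polynomial Abar)*Polynomial.C a2^4*Polynomial.C a3^3*Polynomial.X^3 + (333:Polynomial Abar)*Polynomial.C a2^5*Polynomial.C a4^2*Polynomial.X^2 + (2241:Polynomial Abar)*Polynomial.C a2^5*Polynomial.C a3*Polynomial.C a4*Polynomial.X^3 + (2331:Polynomial Abar)*Polynomial.C a2^5*Polynomial.C a3^2*Polynomial.X^4 + (702:Polynomial Abar)*Polynomial.C a2^6*Polynomial.C a4*Polynomial.X^4 + (-1431:Polynomial Abar)*Polynomial.C a2^6*Polynomial.C a3*Polynomial.C a4*Polynomial.X + (-1431:Polynomial Abar)*Polynomial.C a2^6*Polynomial.C a3^2*Polynomial.X^2 + (-378:Polynomial Abar)*Polynomial.C a2^7*Polynomial.C a4*Polynomial.X^2 + (-1809:Polynomial Abar)*Polynomial.C a2^7*Polynomial.C a3*Polynomial.X^3 + (-378:Polynomial Abar)*Polynomial.C a2^8*Polynomial.X^4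

/-- In `Γ̄ = Ā[r]/(q(r))`, the image of the mod-`(5,a_1,a_5)` discriminant
`a_4^5 − 2a_3^4a_4^2 − a_2a_3^2a_4^3 + 2a_2^2a_4^4 + a_2^3a_3^2a_4^2 + a_2^4a_4^3` is invariant. -/
theorem disc_invariant_mod_q :
    Ideal.Quotient.mk (Ideal.span {q})
        (etaR (a4 ^ 5 - 2 * a3 ^ 4 * a4 ^ 2 - a2 * a3 ^ 2 * a4 ^ 3 + 2 * a2 ^ 2 * a4 ^ 4 +
          a2 ^ 3 * a3 ^ 2 * a4 ^ 2 + a2 ^ 4 * a4 ^ 3)) =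
      Ideal.Quotient.mk (Ideal.span {q})
        (Polynomial.C (a4 ^ 5 - 2 * a3 ^ 4 * a4 ^ 2 - a2 * a3 ^ 2 * a4 ^ 3 + 2 * a2 ^ 2 * a4 ^ 4 +
          a2 ^ 3 * a3 ^ 2 * a4 ^ 2 + a2 ^ 4 * a4 ^ 3)) := by
  have h5 := five_eq_zero
  rw [Ideal.Quotient.eq, Ideal.mem_span_singleton]
  refine ⟨Hcof, ?_⟩
  simp only [map_sub, map_add, map_mul, map_pow, map_ofNat, etaR_a2, etaR_a3, etaR_a4]
  unfold q Hcof
  linear_combination ((2:Polynomial Abar)*Polynomial.C a3*Polynomial.C a4^4*Polynomial.X + (8:Polynomial Abar)*Polynomial.C a3^2*Polynomial.C a4^3*Polynomial.X^2 + (16:Polynomial Abar)*Polynomial.C a3^3*Polynomial.C a4^2*Polynomial.X^3 + (16:Polynomial Abar)*Polynomial.C a3^4*Polynomial.C a4*Polynomial.X^4 + (-8:Polynomial Abar)*Polynomial.C a3^5*Polynomial.C a4*Polynomial.X + (-8:Polynomial Abar)*Polynomial.C a3^6*Polynomial.X^2 + (3:Polynomial Abar)*Polynomial.C a2*Polynomial.C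 a4^4*Polynomial.X^2 + (24:Polynomial Abar)*Polynomial.C a2*Polynomial.C a3*Polynomial.C a4^3*Polynomial.X^3 + (72:Polynomial Abar)*Polynomial.C a2*Polynomial.C a3^2*Polynomial.C a4^2*Polynomial.X^4 + (-102:Polynomial Abar)*Polynomial.C a2*Polynomial.C a3^3*Polynomial.C a4^2*Polynomial.X + (-168:Polynomial Abar)*Polynomial.C a2*Polynomial.C a3^4*Polynomial.C a4*Polynomial.X^2 + (-80:Polynomial Abar)*Polynomial.C a2*Polynomial.C a3^5*Polynomial.X^3 + (18:Polynomial Abar)*Polynomial.C a2^2*Polynomial.C a4^3*Polynomial.X^4 + (-106:Polynomial Abar)*Polynomial.C a2^2*Polynomial.C a3*Polynomial.C a4^3*Polynomial.X + (-345:Polynomial Abar)*Polynomial.C a2^2*Polynomial.C a3^2*Polynomial.C a4^2*Polynomial.X^2 + (-580:Polynomial Abar)*Polynomial.C a2^2*Polynomial.C a3^3*Polynomial.C a4*Polynomial.X^3 + (-350:Polynomial Abar)*Polynomial.C a2^2*Polynomial.C a3^4*Polynomial.X^4 + (-51:Polynomial Abar)*Polynomial.C a2^3*Polynomial.C a4^3*Polynomial.X^2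 + (-414:Polynomial Abar)*Polynomial.C a2^3*Polynomial.C a3*Polynomial.C a4^2*Polynomial.X^3 + (-963:Polynomial Abar)*Polynomial.C a2^3*Polynomial.C a3^2*Polynomial.C a4*Polynomial.X^4 + (866:Polynomial Abar)*Polynomial.C a2^3*Polynomial.C a3^3*Polynomial.C a4*Polynomial.X + (866:Polynomial Abar)*Polynomial.C a2^3*Polynomial.C a3^4*Polynomial.X^2 + (-162:Polynomial Abar)*Polynomial.C a2^4*Polynomial.C a4^2*Polynomial.X^4 + (861:Polynomial Abar)*Polynomial.C a2^4*Polynomial.C a3*Polynomial.C a4^2*Polynomial.X + (2136:Polynomial Abar)*Polynomial.C a2^4*Polynomial.C a3^2*Polynomial.C a4*Polynomial.X^2 + (2143:Polynomial Abar)*Polynomial.C a2^4*Polynomial.C a3^3*Polynomial.X^3 + (333:Polynomial Abar)*Polynomial.C a2^5*Polynomial.C a4^2*Polynomial.X^2 + (2241:Polynomial Abar)*Polynomial.C a2^5*Polynomial.C a3*Polynomial.C a4*Polynomial.X^3 + (2331:Polynomial Abar)*Polynomial.C a2^5*Polynomial.C a3^2*Polynomial.X^4 + (702:Polynomial Abar)*Polynomial.C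 a2^6*Polynomial.C a4*Polynomial.X^4 + (-1431:Polynomial Abar)*Polynomial.C a2^6*Polynomial.C a3*Polynomial.C a4*Polynomial.X + (-1431:Polynomial Abar)*Polynomial.C a2^6*Polynomial.C a3^2*Polynomial.X^2 + (-378:Polynomial Abar)*Polynomial.C a2^7*Polynomial.C a4*Polynomial.X^2 + (-1809:Polynomial Abar)*Polynomial.C a2^7*Polynomial.C a3*Polynomial.X^3 + (-378:Polynomial Abar)*Polynomial.C a2^8*Polynomial.X^4) * h5
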